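/- Consider the inviscid discrete system b_k'(t) = −b_k(t)² + 2 b_{k-1}(t)² for k ≥ 1, b_0 ≡ 0, with C¹ nonnegative solutions on [T₁, T₂]. Fix k ≥ 2. If b_{k-1}(t) < b_{k-2}(t) for all t ∈ [T₁, T₂] and b_k(T₁) < b_{k-1}(T₁), then b_k(t) < b_{k-1}(t) for all t ∈ [T₁, T₂]. -/
import Mathlib


/-- Comparison lemma for the inviscid discrete system `b_k' = −b_k² + 2 b_{k-1}²`:
if `b_{k-1} < b_{k-2}` on `[T₁, T₂]` and `b_k(T₁) < b_{k-1}(T₁)`, then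
`b_k < b_{k-1}` on all of `[T₁, T₂]`. -/
theorem stmt10 (T₁ T₂ : ℝ) (hT : T₁ ≤ T₂) (b : ℕ → ℝ → ℝ)
    (hb0 : ∀ t ∈ Set.Icc T₁ T₂, b 0 t = 0)
    (hderiv : ∀ j : ℕ, 1 ≤ j → ∀ t ∈ Set.Icc T₁ T₂,
      HasDerivAt (b j) (-(b j t)^2 + 2 * (b (j-1) t)^2) t)
    (hnonneg : ∀ j : ℕ, ∀ t ∈ Set.Icc T₁ T₂, 0 ≤ b j t)
    (k : ℕ) (hk : 2 ≤ k)
    (hlow : ∀ t ∈ Set.Icc T₁ T₂, b (k-1) t < b (k-2) t)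
    (hinit : b k T₁ < b (k-1) T₁) :
    ∀ t ∈ Set.Icc T₁ T₂, b k t < b (k-1) t := by
  by_contra hcon
  push_neg at hcon
  obtain ⟨t₀, ht₀, ht₀le⟩ := hcon
  set f : ℝ → ℝ := fun t => b (k-1) t - b k t with hfdef
  have hk1 : 1 ≤ k - 1 := by omega
  have hk11 : k - 1 - 1 = k - 2 := by omega
  have hfderiv : ∀ t ∈ Set.Icc T₁ T₂, HasDerivAt f
      ((-(b (k-1) t)^2 + 2 * (b (k-2) t)^2) - (-(b k t)^2 + 2 * (b (k-1) t)^2)) t := by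
    intro t ht
    have h1 := hderiv (k-1) hk1 t ht
    rw [hk11] at h1
    exact h1.sub (hderiv k (by omega) t ht)
  have hfcont : ContinuousOn f (Set.Icc T₁ T₂) := fun t ht =>
    (hfderiv t ht).continuousAt.continuousWithinAt
  set S := Set.Icc T₁ T₂ ∩ f ⁻¹' Set.Iic 0 with hSdef
  have hSne : S.Nonempty := ⟨t₀, ht₀, by simp only [Set.mem_preimage, Set.mem_Iic]; simp [hfdef]; linarith⟩
  have hSbdd : BddBelow S := ⟨T₁, fun t ht => ht.1.1⟩
  have hSclosed : IsClosed S :=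
    hfcont.preimage_isClosed_of_isClosed isClosed_Icc isClosed_Iic
  set s := sInf S with hsdef
  have hs : s ∈ S := hSclosed.csInf_mem hSne hSbdd
  have hsIcc : s ∈ Set.Icc T₁ T₂ := hs.1
  have hfT₁ : 0 < f T₁ := by simp [hfdef]; linarith
  have hT₁s : T₁ < s := by
    rcases lt_or_eq_of_le hsIcc.1 with h | h
    · exact h
    · exfalso
      have : f s ≤ 0 := hs.2
      rw [← h] at this
      linarith
  have hpos : ∀ t ∈ Set.Ico T₁ s, 0 < f t := by
    intro t ht
    have htS : t ∉ S := notMem_of_lt_csInf ht.2 hSbdd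
    have htIcc : t ∈ Set.Icc T₁ T₂ := ⟨ht.1, le_trans (le_of_lt ht.2) hsIcc.2⟩
    by_contra h
    push_neg at h
    exact htS ⟨htIcc, h⟩
  have hmem : Set.Ioo T₁ s ∈ nhdsWithin s (Set.Iio s) :=
    Ioo_mem_nhdsLT_of_mem ⟨hT₁s, le_refl s⟩
  have hfs0 : f s = 0 := by
    refine le_antisymm hs.2 ?_
    have htend : Filter.Tendsto f (nhdsWithin s (Set.Iio s)) (nhds (f s)) :=
      ((hfderiv s hsIcc).continuousAt.tendsto).mono_left nhdsWithin_le_nhds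
    exact ge_of_tendsto htend (Filter.eventually_of_mem hmem
      (fun t ht => le_of_lt (hpos t ⟨le_of_lt ht.1, ht.2⟩)))
  have hbeq : b k s = b (k-1) s := by
    have := hfs0; simp [hfdef] at this; linarith
  have hd : 0 < (-(b (k-1) s)^2 + 2 * (b (k-2) s)^2) - (-(b k s)^2 + 2 * (b (k-1) s)^2) := by
    have h1 := hlow s hsIcc
    have h2 := hnonneg (k-1) s hsIcc
    rw [hbeq]
    nlinarith
  have hslope := hasDerivAt_iff_tendsto_slope.mp (hfderiv s hsIcc)
  have hslope' : Filter.Tendsto (slope f s) (nhdsWithin s (Set.Iio s)) (nhds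
      ((-(b (k-1) s)^2 + 2 * (b (k-2) s)^2) - (-(b k s)^2 + 2 * (b (k-1) s)^2))) :=
    hslope.mono_left (nhdsWithin_mono s (fun x hx => ne_of_lt hx))
  have hev1 : ∀ᶠ t in nhdsWithin s (Set.Iio s), 0 < slope f s t :=
    hslope'.eventually (eventually_gt_nhds hd)
  have hev2 : ∀ᶠ t in nhdsWithin s (Set.Iio s), slope f s t < 0 :=
    Filter.eventually_of_mem hmem (fun t ht => by
      have hft : 0 < f t := hpos t ⟨le_of_lt ht.1, ht.2⟩
      rw [slope_def_field, hfs0]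
      exact div_neg_of_pos_of_neg (by linarith) (by linarith [ht.2]))
  obtain ⟨t, h1, h2⟩ := (hev1.and hev2).exists
  linarith
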